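/- arXiv:1702.08599 — 2 statements merged into one kernel-verified Lean document; each statement's English description precedes it below -/
import Mathlib

section
/- Let p be a prime, let n ≥ 2 be an integer, and let N be a positive integer with p | N. Then Z_n(N,p) = (n!/N) · Σ 1/(u_1 u_2 ⋯ u_{n−1}), where the sum runs over all integers 1 ≤ u_1 < u_2 < ⋯ < u_{n−1} < N such that u_1, u_2 − u_1, …, u_{n−1} − u_{n−2}, and u_{n−1} all lie in 𝒫_p. -/
open Finset

attribute [local instance] Classical.propDecidable

/-- `x ≡ y (mod p^s)` for rational numbers `x, y`: the `p`-adic valuation of `x - y`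
is at least `s` (where the valuation of `0` is regarded as `+∞`). -/
def padicCong (p s : ℕ) (x y : ℚ) : Prop :=
  x = y ∨ (s : ℤ) ≤ padicValRat p (x - y)

/-- `Z_n(N,p)`: the sum of `1/(l₁⋯lₙ)` over all ordered `n`-tuples `(l₁,…,lₙ)` of
positive integers not divisible by `p` with `l₁+⋯+lₙ = N`. -/
noncomputable def Zsum (p n N : ℕ) : ℚ :=
  ∑ l ∈ (Finset.Nat.antidiagonalTuple n N).filter
      (fun l => ∀ i, 0 < l i ∧ ¬ p ∣ l i),
    ∏ i, (l i : ℚ)⁻¹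

/-- `S_n^{(m)}(p^r)`: the sum of `1/(l₁⋯lₙ)` over all ordered `n`-tuples `(l₁,…,lₙ)` of
positive integers not divisible by `p`, each `< p^r`, with `l₁+⋯+lₙ = m·p^r`. -/
noncomputable def Ssum (p n m r : ℕ) : ℚ :=
  ∑ l ∈ (Finset.Nat.antidiagonalTuple n (m * p ^ r)).filter
      (fun l => ∀ i, (0 < l i ∧ ¬ p ∣ l i) ∧ l i < p ^ r),
    ∏ i, (l i : ℚ)⁻¹

/-- `σ_n^{(b)}(N,p)`: the sum of `(-1)^(l₁+⋯+l_b)/(l₁⋯lₙ)` over all ordered `n`-tuples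
`(l₁,…,lₙ)` of positive integers not divisible by `p` with `l₁+⋯+lₙ = N`. -/
noncomputable def sigmaSum (p n b N : ℕ) : ℚ :=
  ∑ l ∈ (Finset.Nat.antidiagonalTuple n N).filter
      (fun l => ∀ i, 0 < l i ∧ ¬ p ∣ l i),
    (-1 : ℚ) ^ (∑ i ∈ univ.filter (fun i : Fin n => (i : ℕ) < b), l i) *
      ∏ i, (l i : ℚ)⁻¹

/-- The value of a finite tuple at position `j`, extended by `0`. -/
noncomputable def seqAt {k : ℕ} (u : Fin k → ℕ) (j : ℕ) : ℕ :=
  if h : j < k then u ⟨j, h⟩ else 0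

/-- The chain `i₁, i₂, …, i_d, l₁+⋯+l_a` (indexed from `0`): position `j < d` gives
`i_{j+1}` and position `d` (or beyond) gives `l₁+⋯+l_a`. -/
noncomputable def Fchain {d a : ℕ} (i : Fin d → ℕ) (l : Fin a → ℕ) : ℕ → ℕ :=
  fun j => if h : j < d then i ⟨j, h⟩ else ∑ k, l k

/-- The summation conditions for `F_a^{(b)}(s,N,p)`:
`N > i₁ > ⋯ > i_d > l₁+⋯+l_a`, each `l_k ∈ 𝒫_p`, and
`i₁, i₁-i₂, …, i_{d-1}-i_d, i_d-(l₁+⋯+l_a) ∈ 𝒫_p`.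
(When `d = 0` this reduces to `l₁+⋯+l_a < N` and each `l_k ∈ 𝒫_p`.) -/
def FCond (p : ℕ) {d a : ℕ} (i : Fin d → ℕ) (l : Fin a → ℕ) (N : ℕ) : Prop :=
  (∀ k, 0 < l k ∧ ¬ p ∣ l k) ∧
  Fchain i l 0 < N ∧
  (0 < d → 0 < Fchain i l 0 ∧ ¬ p ∣ Fchain i l 0) ∧
  ∀ j < d, Fchain i l (j + 1) < Fchain i l j ∧
    0 < Fchain i l j - Fchain i l (j + 1) ∧ ¬ p ∣ (Fchain i l j - Fchain i l (j + 1))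

/-- `F_a^{(b)}(s,N,p)` where `s = (s₁,…,s_d)` is a vector of signs. -/
noncomputable def Fsum (p a b : ℕ) {d : ℕ} (s : Fin d → ℤ) (N : ℕ) : ℚ :=
  ∑ il ∈ ((Fintype.piFinset fun _ : Fin d => Finset.range N) ×ˢ
          (Fintype.piFinset fun _ : Fin a => Finset.range N)).filter
      (fun il => FCond p il.1 il.2 N),
    (∏ j, (s j : ℚ) ^ il.1 j) *
      (-1 : ℚ) ^ (∑ k ∈ univ.filter (fun k : Fin a => (k : ℕ) < b), il.2 k) /
      ((∏ j, (il.1 j : ℚ)) * ∏ k, (il.2 k : ℚ))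

/-- `A_s`: the total size of the odd-indexed blocks in the decomposition
`s = (X_{w₁}, Z_{w₂}, …, Z_{w_l})`; equivalently, the number of positions `j` such that
the number of `-1`-entries among `s₁,…,s_j` is even. -/
noncomputable def Acount {d : ℕ} (s : Fin d → ℤ) : ℕ :=
  (univ.filter fun j : Fin d =>
    Even (univ.filter (fun k : Fin d => k ≤ j ∧ s k = -1)).card).card

/-- `B_s`: the total size of the even-indexed blocks in the decomposition
`s = (X_{w₁}, Z_{w₂}, …, Z_{w_l})`; equivalently, the number of positions `j` such that
the number of `-1`-entries among `s₁,…,s_j` is odd. -/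
noncomputable def Bcount {d : ℕ} (s : Fin d → ℤ) : ℕ :=
  (univ.filter fun j : Fin d =>
    Odd (univ.filter (fun k : Fin d => k ≤ j ∧ s k = -1)).card).card

/-- `len(W_s)`: the number of blocks, namely `1` plus the number of `-1`-entries of `s`. -/
noncomputable def lenW {d : ℕ} (s : Fin d → ℤ) : ℕ :=
  1 + (univ.filter fun k : Fin d => s k = -1).card

/-- `P_s` (for given `a ≥ b`): `a - b - A_s` if `len(W_s)` is even, `b - B_s` if odd.
For `s = ∅` this gives `P_∅ = b`. -/
noncomputable def Pval (a b : ℕ) {d : ℕ} (s : Fin d → ℤ) : ℕ :=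
  if 2 ∣ lenW s then a - b - Acount s else b - Bcount s

/-- `C_{a,b}(A,B)`, defined via falling factorials `(x)_γ = x(x-1)⋯(x-γ+1)`. -/
def Cab (a b A B : ℕ) : ℚ :=
  if A = 0 ∧ B = 0 then 1
  else if A = 0 then (b.descFactorial B : ℚ)
  else if B = 0 then ((a - b).descFactorial A : ℚ)
  else ((a - b).descFactorial A : ℚ) * (b.descFactorial B : ℚ)

lemma suffix_perm_sum : ∀ (n : ℕ) (f : Fin n → ℚ), (∀ i, 0 < f i) →
    ∑ σ : Equiv.Perm (Fin n), ∏ j : Fin n,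
      (∑ k ∈ univ.filter (fun k => j ≤ k), f (σ k))⁻¹ = ∏ i, (f i)⁻¹ := by
  intro n
  induction n with
  | zero => intro f _; simp
  | succ n ih =>
    intro f hf
    have hS : (0:ℚ) < ∑ i, f i := Finset.sum_pos (fun i _ => hf i) univ_nonempty
    rw [← Equiv.sum_comp Equiv.Perm.decomposeFin.symm
      (fun σ => ∏ j : Fin (n+1), (∑ k ∈ univ.filter (fun k => j ≤ k), f (σ k))⁻¹),
      Fintype.sum_prod_type]
    have key : ∀ (i : Fin (n+1)) (e : Equiv.Perm (Fin n)),
        ∏ j : Fin (n+1), (∑ k ∈ univ.filter (fun k => j ≤ k),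
            f ((Equiv.Perm.decomposeFin.symm (i, e)) k))⁻¹
        = (∑ i, f i)⁻¹ * ∏ j : Fin n, (∑ k ∈ univ.filter (fun k => j ≤ k),
            f (Equiv.swap 0 i (e k).succ))⁻¹ := by
      intro i e
      rw [Fin.prod_univ_succ]
      congr 1
      · rw [Finset.filter_true_of_mem (fun k _ => Fin.zero_le k)]
        rw [Equiv.sum_comp (Equiv.Perm.decomposeFin.symm (i, e)) f]
      · apply Finset.prod_congr rfl
        intro j _
        congr 1
        rw [Finset.sum_filter, Finset.sum_filter, Fin.sum_univ_succ]
        have h0 : ¬ (j.succ ≤ (0 : Fin (n+1))) := by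
          simp [Fin.le_zero_iff, Fin.succ_ne_zero]
        rw [if_neg h0, zero_add]
        apply Finset.sum_congr rfl
        intro k _
        simp only [Fin.succ_le_succ_iff, Equiv.Perm.decomposeFin_symm_apply_succ]
    simp_rw [key]
    have himg : ∀ i : Fin (n+1),
        ∏ x : Fin n, (f (Equiv.swap 0 i x.succ))⁻¹ = f i * ∏ y, (f y)⁻¹ := by
      intro i
      have h1 : ∏ x : Fin n, (f (Equiv.swap 0 i x.succ))⁻¹
          = ∏ y ∈ univ.erase i, (f y)⁻¹ := by
        refine Finset.prod_bij' (i := fun x _ => Equiv.swap 0 i x.succ)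
          (j := fun y hy => (Equiv.swap 0 i y).pred (by
            intro h
            have hy2 : y = i := by
              have := congrArg (Equiv.swap 0 i) h
              simpa using this
            exact (Finset.mem_erase.mp hy).1 hy2))
          ?_ ?_ ?_ ?_ ?_
        · intro x _
          apply Finset.mem_erase.mpr
          refine ⟨?_, Finset.mem_univ _⟩
          intro h
          have h2 := congrArg (Equiv.swap 0 i) h
          simp at h2
        · intro y hy; exact Finset.mem_univ _
        · intro x _; simp
        · intro y hy; simp
        · intro x _; rfl
      rw [h1]
      have hfi : (f i) ≠ 0 := ne_of_gt (hf i)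
      have h2 := Finset.mul_prod_erase univ (fun y => (f y)⁻¹) (Finset.mem_univ i)
      rw [← h2, ← mul_assoc, mul_inv_cancel₀ hfi, one_mul]
    have step : ∀ i : Fin (n+1),
        ∑ e : Equiv.Perm (Fin n), (∑ i, f i)⁻¹ * ∏ j : Fin n,
          (∑ k ∈ univ.filter (fun k => j ≤ k), f (Equiv.swap 0 i (e k).succ))⁻¹
        = (∑ i, f i)⁻¹ * (f i * ∏ y, (f y)⁻¹) := by
      intro i
      rw [← Finset.mul_sum]
      congr 1
      rw [ih (fun x => f (Equiv.swap 0 i x.succ)) (fun x => hf _)]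
      exact himg i
    simp_rw [step]
    rw [← Finset.mul_sum, ← Finset.sum_mul, ← mul_assoc, inv_mul_cancel₀ (ne_of_gt hS), one_mul]

lemma prefix_perm_sum (n : ℕ) (f : Fin n → ℚ) (hf : ∀ i, 0 < f i) :
    ∑ σ : Equiv.Perm (Fin n), ∏ j : Fin n,
      (∑ k ∈ univ.filter (fun k => k ≤ j), f (σ k))⁻¹ = ∏ i, (f i)⁻¹ := by
  rw [← suffix_perm_sum n f hf]
  apply Fintype.sum_equiv (Equiv.mulRight Fin.revPerm)
  intro σ
  have inner : ∀ j : Fin n, (∑ k ∈ univ.filter (fun k => k ≤ j), f (σ k))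
      = ∑ k ∈ univ.filter (fun k => j.rev ≤ k), f (σ k.rev) := by
    intro j
    rw [Finset.sum_filter, Finset.sum_filter,
      ← Equiv.sum_comp Fin.revPerm (fun k => if j.rev ≤ k then f (σ k.rev) else 0)]
    apply Finset.sum_congr rfl
    intro k _
    simp [Fin.rev_le_rev, Fin.rev_rev]
  rw [← Equiv.prod_comp Fin.revPerm
    (fun j => (∑ k ∈ univ.filter (fun k => j ≤ k), f ((Equiv.mulRight Fin.revPerm σ) k))⁻¹)]
  apply Finset.prod_congr rfl
  intro j _
  rw [inner j]
  rfl

noncomputable def pfx {n : ℕ} (l : Fin n → ℕ) (t : ℕ) : ℕ :=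
  ∑ k ∈ univ.filter (fun k : Fin n => (k : ℕ) ≤ t), l k

lemma pfx_zero {n : ℕ} (l : Fin n → ℕ) (h : 0 < n) : pfx l 0 = l ⟨0, h⟩ := by
  have hf : univ.filter (fun k : Fin n => (k : ℕ) ≤ 0) = {⟨0, h⟩} := by
    ext k; simp [Fin.ext_iff, Nat.le_zero]
  rw [pfx, hf, Finset.sum_singleton]

lemma pfx_succ {n : ℕ} (l : Fin n → ℕ) (t : ℕ) :
    pfx l (t + 1) = pfx l t + (if h : t + 1 < n then l ⟨t + 1, h⟩ else 0) := by
  by_cases h : t + 1 < n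
  · rw [dif_pos h]
    have hf : univ.filter (fun k : Fin n => (k : ℕ) ≤ t + 1)
        = insert (⟨t + 1, h⟩ : Fin n) (univ.filter (fun k : Fin n => (k : ℕ) ≤ t)) := by
      ext k
      simp only [Finset.mem_filter, Finset.mem_univ, true_and, Finset.mem_insert, Fin.ext_iff]
      omega
    rw [pfx, pfx, hf, Finset.sum_insert (by simp), add_comm]
  · rw [dif_neg h]
    have hf : univ.filter (fun k : Fin n => (k : ℕ) ≤ t + 1)
        = univ.filter (fun k : Fin n => (k : ℕ) ≤ t) := by
      ext k
      simp only [Finset.mem_filter, Finset.mem_univ, true_and]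
      have := k.isLt; omega
    rw [pfx, pfx, hf, add_zero]

lemma pfx_total {n : ℕ} (l : Fin n → ℕ) (t : ℕ) (h : n ≤ t + 1) :
    pfx l t = ∑ k, l k := by
  rw [pfx, Finset.filter_true_of_mem]
  intro k _; have := k.isLt; omega

lemma pfx_mono {n : ℕ} (l : Fin n → ℕ) {t t' : ℕ} (h : t ≤ t') : pfx l t ≤ pfx l t' := by
  apply Finset.sum_le_sum_of_subset
  intro k hk
  simp only [Finset.mem_filter, Finset.mem_univ, true_and] at hk ⊢
  omega

lemma mono_of_step (c : ℕ → ℕ) : ∀ b, (∀ t < b, c t ≤ c (t + 1)) → ∀ a ≤ b, c a ≤ c b := by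
  intro b
  induction b with
  | zero => intro _ a ha; rw [Nat.le_zero.mp ha]
  | succ b ih =>
    intro h a ha
    rcases Nat.lt_or_ge a (b + 1) with h1 | h1
    · have := ih (fun t ht => h t (by omega)) a (by omega)
      have := h b (by omega)
      omega
    · have heq : a = b + 1 := by omega
      rw [heq]

lemma tele (c : ℕ → ℕ) : ∀ T, (∀ t < T, c t ≤ c (t + 1)) →
    ∑ k ∈ Finset.range T, (c (k + 1) - c k) = c T - c 0 := by
  intro T
  induction T with
  | zero => simp
  | succ T ih =>
    intro h
    rw [Finset.sum_range_succ, ih (fun t ht => h t (by omega))]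
    have h1 : c 0 ≤ c T := mono_of_step c T (fun t ht => h t (by omega)) 0 (by omega)
    have h2 : c T ≤ c (T + 1) := h T (by omega)
    omega

noncomputable def chainC (N m : ℕ) (u : Fin (m + 1) → ℕ) (t : ℕ) : ℕ :=
  if t = 0 then 0 else if t ≤ m + 1 then seqAt u (t - 1) else N

noncomputable def chainL (N m : ℕ) (u : Fin (m + 1) → ℕ) (k : Fin (m + 2)) : ℕ :=
  chainC N m u ((k : ℕ) + 1) - chainC N m u (k : ℕ)

lemma seqAt_apply {k : ℕ} (u : Fin k → ℕ) (j : ℕ) (h : j < k) : seqAt u j = u ⟨j, h⟩ :=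
  dif_pos h

lemma chainC_zero (N m : ℕ) (u : Fin (m + 1) → ℕ) : chainC N m u 0 = 0 := by
  simp [chainC]

lemma chainC_mid (N m : ℕ) (u : Fin (m + 1) → ℕ) (t : ℕ) (h1 : 1 ≤ t) (h2 : t ≤ m + 1) :
    chainC N m u t = seqAt u (t - 1) := by
  rw [chainC, if_neg (by omega), if_pos h2]

lemma chainC_top (N m : ℕ) (u : Fin (m + 1) → ℕ) (t : ℕ) (h : m + 1 < t) :
    chainC N m u t = N := by
  rw [chainC, if_neg (by omega), if_neg (by omega)]

lemma chain_bij (p : ℕ) (hp : p.Prime) (m N : ℕ) (hN : 0 < N) (hpN : p ∣ N) :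
    ∑ l ∈ (Finset.Nat.antidiagonalTuple (m + 2) N).filter
        (fun l => ∀ i, 0 < l i ∧ ¬ p ∣ l i),
      ∏ j : Fin (m + 1), ((pfx l (j : ℕ) : ℕ) : ℚ)⁻¹
    = ∑ u ∈ (Fintype.piFinset fun _ : Fin (m + 1) => Finset.range N).filter
          (fun u => (0 < seqAt u 0 ∧ ¬ p ∣ seqAt u 0) ∧
            (∀ j < m, seqAt u j < seqAt u (j + 1) ∧
              0 < seqAt u (j + 1) - seqAt u j ∧ ¬ p ∣ (seqAt u (j + 1) - seqAt u j)) ∧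
            (0 < seqAt u m ∧ ¬ p ∣ seqAt u m)),
        ∏ j, (u j : ℚ)⁻¹ := by
  apply Finset.sum_nbij' (i := fun l => fun j : Fin (m + 1) => pfx l (j : ℕ))
    (j := fun u => chainL N m u)
  -- hi : maps into U
  · intro l hl
    rw [Finset.mem_filter] at hl
    obtain ⟨hmem, hcond⟩ := hl
    rw [Finset.Nat.mem_antidiagonalTuple] at hmem
    have hsuc : ∀ t, ∀ ht2 : t + 1 < m + 2, pfx l (t + 1) = pfx l t + l ⟨t + 1, ht2⟩ := by
      intro t ht
      rw [pfx_succ, dif_pos ht]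
    have htotN : pfx l m + l ⟨m + 1, by omega⟩ = N := by
      have h1 := hsuc m (by omega)
      have h2 := pfx_total l (m + 1) (by omega)
      omega
    have hub : ∀ j : ℕ, j ≤ m → pfx l j < N := by
      intro j hj
      have := pfx_mono l hj
      have := (hcond ⟨m + 1, by omega⟩).1
      omega
    rw [Finset.mem_filter]
    refine ⟨?_, ?_, ?_, ?_⟩
    · rw [Fintype.mem_piFinset]
      intro j
      rw [Finset.mem_range]
      exact hub j (by omega)
    · rw [seqAt_apply _ 0 (by omega)]
      show 0 < pfx l 0 ∧ ¬ p ∣ pfx l 0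
      rw [pfx_zero l (by omega)]
      exact hcond _
    · intro j hj
      rw [seqAt_apply _ j (by omega), seqAt_apply _ (j + 1) (by omega)]
      show pfx l j < pfx l (j + 1) ∧ 0 < pfx l (j + 1) - pfx l j ∧ ¬ p ∣ (pfx l (j + 1) - pfx l j)
      have h1 := hsuc j (by omega)
      have h2 := hcond ⟨j + 1, by omega⟩
      constructor
      · omega
      constructor
      · omega
      · have : pfx l (j + 1) - pfx l j = l ⟨j + 1, by omega⟩ := by omega
        rw [this]
        exact h2.2
    · rw [seqAt_apply _ m (by omega)]
      show 0 < pfx l m ∧ ¬ p ∣ pfx l m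
      constructor
      · have h1 := pfx_mono l (Nat.zero_le m)
        have h2 : pfx l 0 = l ⟨0, by omega⟩ := pfx_zero l (by omega)
        have h3 := (hcond ⟨0, by omega⟩).1
        omega
      · intro hdvd
        have h4 : l ⟨m + 1, by omega⟩ = N - pfx l m := by omega
        have h5 : p ∣ N - pfx l m := Nat.dvd_sub hpN hdvd
        rw [← h4] at h5
        exact (hcond ⟨m + 1, by omega⟩).2 h5
  -- hj : maps into S
  · intro u hu
    rw [Finset.mem_filter] at hu
    obtain ⟨hmem, c1, c2, c3⟩ := hu
    rw [Fintype.mem_piFinset] at hmem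
    have hult : ∀ j : ℕ, (h : j < m + 1) → seqAt u j < N := by
      intro j h
      rw [seqAt_apply _ j h]
      exact Finset.mem_range.mp (hmem _)
    have hstep : ∀ t < m + 2, chainC N m u t ≤ chainC N m u (t + 1) := by
      intro t ht
      rcases Nat.eq_zero_or_pos t with h0 | h1
      · rw [h0, chainC_zero]; exact Nat.zero_le _
      rcases Nat.lt_or_ge t (m + 1) with h2 | h2
      · rw [chainC_mid N m u t h1 (by omega), chainC_mid N m u (t + 1) (by omega) (by omega)]
        rcases Nat.eq_zero_or_pos m with hm | hm
        · omega
        have := (c2 (t - 1) (by omega)).1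
        have he : t - 1 + 1 = t := by omega
        rw [he] at this
        have he2 : t + 1 - 1 = t := by omega
        rw [he2]
        omega
      · have ht2 : t = m + 1 := by omega
        rw [ht2, chainC_mid N m u (m + 1) (by omega) (by omega), chainC_top N m u (m + 2) (by omega)]
        have := hult m (by omega)
        simp only [Nat.add_sub_cancel]
        omega
    rw [Finset.mem_filter, Finset.Nat.mem_antidiagonalTuple]
    refine ⟨?_, ?_⟩
    · have h1 : ∑ k : Fin (m + 2), chainL N m u k
          = ∑ k ∈ Finset.range (m + 2), (chainC N m u (k + 1) - chainC N m u k) :=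
        Fin.sum_univ_eq_sum_range (fun k => chainC N m u (k + 1) - chainC N m u k) (m + 2)
      rw [h1, tele _ _ hstep, chainC_zero, chainC_top N m u (m + 2) (by omega)]
      omega
    · intro k
      have hk := k.isLt
      show 0 < chainC N m u ((k : ℕ) + 1) - chainC N m u (k : ℕ) ∧
        ¬ p ∣ (chainC N m u ((k : ℕ) + 1) - chainC N m u (k : ℕ))
      rcases Nat.eq_zero_or_pos (k : ℕ) with h0 | h1
      · rw [h0, chainC_zero, chainC_mid N m u 1 (by omega) (by omega)]
        simpa using c1
      rcases Nat.lt_or_ge (k : ℕ) (m + 1) with h2 | h2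
      · rw [chainC_mid N m u (k : ℕ) h1 (by omega),
          chainC_mid N m u ((k : ℕ) + 1) (by omega) (by omega)]
        have h3 := c2 ((k : ℕ) - 1) (by omega)
        have he : (k : ℕ) - 1 + 1 = (k : ℕ) := by omega
        rw [he] at h3
        have he2 : (k : ℕ) + 1 - 1 = (k : ℕ) := by omega
        rw [he2]
        exact ⟨h3.2.1, h3.2.2⟩
      · have ht2 : (k : ℕ) = m + 1 := by omega
        rw [ht2, chainC_mid N m u (m + 1) (by omega) (by omega),
          chainC_top N m u (m + 2) (by omega)]
        simp only [Nat.add_sub_cancel]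
        have h4 := hult m (by omega)
        refine ⟨by omega, ?_⟩
        intro hdvd
        have h5 := Nat.dvd_sub hpN hdvd
        have h6 : N - (N - seqAt u m) = seqAt u m := by omega
        rw [h6] at h5
        exact c3.2 h5
  -- left_inv
  · intro l hl
    rw [Finset.mem_filter] at hl
    obtain ⟨hmem, hcond⟩ := hl
    rw [Finset.Nat.mem_antidiagonalTuple] at hmem
    have hsuc : ∀ t : ℕ, ∀ ht2 : t + 1 < m + 2, pfx l (t + 1) = pfx l t + l ⟨t + 1, ht2⟩ := by
      intro t ht2
      rw [pfx_succ, dif_pos ht2]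
    have hmid : ∀ s : ℕ, 1 ≤ s → s ≤ m + 1 →
        chainC N m (fun j : Fin (m + 1) => pfx l (j : ℕ)) s = pfx l (s - 1) := by
      intro s hs1 hs2
      rw [chainC_mid N m _ s hs1 hs2, seqAt_apply _ (s - 1) (by omega)]
    funext k
    have hk := k.isLt
    show chainC N m _ ((k : ℕ) + 1) - chainC N m _ (k : ℕ) = l k
    rcases Nat.eq_zero_or_pos (k : ℕ) with h0 | h1
    · rw [h0, chainC_zero, hmid 1 (by omega) (by omega)]
      have hk0 : k = ⟨0, by omega⟩ := Fin.ext h0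
      rw [hk0, pfx_zero l (by omega)]
      simp
    rcases Nat.lt_or_ge (k : ℕ) (m + 1) with h2 | h2
    · have h3 := hsuc ((k : ℕ) - 1) (by omega)
      have hkk : (⟨(k : ℕ) - 1 + 1, by omega⟩ : Fin (m + 2)) = k :=
        Fin.ext (by show (k : ℕ) - 1 + 1 = (k : ℕ); omega)
      rw [hkk] at h3
      have he : (k : ℕ) - 1 + 1 = (k : ℕ) := by omega
      rw [he] at h3
      rw [hmid (k : ℕ) h1 (by omega), hmid ((k : ℕ) + 1) (by omega) (by omega)]
      simp only [Nat.add_sub_cancel]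
      omega
    · have ht2 : (k : ℕ) = m + 1 := by omega
      have h3 := hsuc m (by omega)
      have hkk : (⟨m + 1, by omega⟩ : Fin (m + 2)) = k :=
        Fin.ext (by show m + 1 = (k : ℕ); omega)
      rw [hkk] at h3
      have h4 := pfx_total l (m + 1) (by omega)
      rw [ht2, hmid (m + 1) (by omega) (by omega), chainC_top N m _ (m + 2) (by omega)]
      simp only [Nat.add_sub_cancel]
      omega
  -- right_inv
  · intro u hu
    rw [Finset.mem_filter] at hu
    obtain ⟨hmem, c1, c2, c3⟩ := hu
    rw [Fintype.mem_piFinset] at hmem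
    have hult : ∀ j : ℕ, (h : j < m + 1) → seqAt u j < N := by
      intro j h
      rw [seqAt_apply _ j h]
      exact Finset.mem_range.mp (hmem _)
    have hstep : ∀ t < m + 2, chainC N m u t ≤ chainC N m u (t + 1) := by
      intro t ht
      rcases Nat.eq_zero_or_pos t with h0 | h1
      · rw [h0, chainC_zero]; exact Nat.zero_le _
      rcases Nat.lt_or_ge t (m + 1) with h2 | h2
      · rw [chainC_mid N m u t h1 (by omega), chainC_mid N m u (t + 1) (by omega) (by omega)]
        rcases Nat.eq_zero_or_pos m with hm | hm
        · omega
        have := (c2 (t - 1) (by omega)).1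
        have he : t - 1 + 1 = t := by omega
        rw [he] at this
        have he2 : t + 1 - 1 = t := by omega
        rw [he2]
        omega
      · have ht2 : t = m + 1 := by omega
        rw [ht2, chainC_mid N m u (m + 1) (by omega) (by omega), chainC_top N m u (m + 2) (by omega)]
        have := hult m (by omega)
        simp only [Nat.add_sub_cancel]
        omega
    have hrec : ∀ t : ℕ, t ≤ m → pfx (chainL N m u) t = chainC N m u (t + 1) := by
      intro t
      induction t with
      | zero =>
        intro _
        rw [pfx_zero (chainL N m u) (by omega)]
        show chainC N m u (0 + 1) - chainC N m u 0 = chainC N m u (0 + 1)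
        rw [chainC_zero]
        omega
      | succ t ih =>
        intro ht
        rw [pfx_succ, dif_pos (show t + 1 < m + 2 by omega), ih (by omega)]
        have h1 := hstep (t + 1) (by omega)
        show chainC N m u (t + 1) + (chainC N m u (t + 1 + 1) - chainC N m u (t + 1))
          = chainC N m u (t + 1 + 1)
        omega
    funext j
    have hj := j.isLt
    show pfx (chainL N m u) (j : ℕ) = u j
    rw [hrec (j : ℕ) (by omega), chainC_mid N m u ((j : ℕ) + 1) (by omega) (by omega)]
    simp only [Nat.add_sub_cancel]
    rw [seqAt_apply _ (j : ℕ) hj]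
  -- values
  · intro l _
    rfl

theorem stmt0 (p : ℕ) (hp : p.Prime) (n : ℕ) (hn : 2 ≤ n) (N : ℕ) (hN : 0 < N)
    (hpN : p ∣ N) :
    Zsum p n N = (n.factorial : ℚ) / N *
      ∑ u ∈ (Fintype.piFinset fun _ : Fin (n - 1) => Finset.range N).filter
          (fun u => (0 < seqAt u 0 ∧ ¬ p ∣ seqAt u 0) ∧
            (∀ j < n - 2, seqAt u j < seqAt u (j + 1) ∧
              0 < seqAt u (j + 1) - seqAt u j ∧ ¬ p ∣ (seqAt u (j + 1) - seqAt u j)) ∧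
            (0 < seqAt u (n - 2) ∧ ¬ p ∣ seqAt u (n - 2))),
        ∏ j, (u j : ℚ)⁻¹ := by
  obtain ⟨m, rfl⟩ : ∃ m, n = m + 2 := ⟨n - 2, by omega⟩
  have e1 : m + 2 - 1 = m + 1 := rfl
  have e2 : m + 2 - 2 = m := rfl
  simp only [e1, e2]
  rw [Zsum]
  set S := (Finset.Nat.antidiagonalTuple (m + 2) N).filter
      (fun l => ∀ i, 0 < l i ∧ ¬ p ∣ l i) with hS
  have hA : ∀ l ∈ S, ∏ i, (l i : ℚ)⁻¹
      = ∑ σ : Equiv.Perm (Fin (m + 2)), ∏ j : Fin (m + 2),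
          (∑ k ∈ univ.filter (fun k => k ≤ j), ((l (σ k) : ℚ)))⁻¹ := by
    intro l hl
    rw [hS, Finset.mem_filter] at hl
    exact (prefix_perm_sum (m + 2) (fun i => (l i : ℚ))
      (fun i => Nat.cast_pos.mpr (hl.2 i).1)).symm
  rw [Finset.sum_congr rfl hA, Finset.sum_comm]
  have hB : ∀ σ : Equiv.Perm (Fin (m + 2)),
      ∑ l ∈ S, ∏ j : Fin (m + 2), (∑ k ∈ univ.filter (fun k => k ≤ j), ((l (σ k) : ℚ)))⁻¹
      = ∑ l ∈ S, ∏ j : Fin (m + 2), (∑ k ∈ univ.filter (fun k => k ≤ j), ((l k : ℚ)))⁻¹ := by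
    intro σ
    apply Finset.sum_nbij' (i := fun l => fun x => l (σ x)) (j := fun l => fun x => l (σ⁻¹ x))
    · intro l hl
      rw [hS, Finset.mem_filter, Finset.Nat.mem_antidiagonalTuple] at hl ⊢
      exact ⟨by rw [Equiv.sum_comp σ l]; exact hl.1, fun i => hl.2 (σ i)⟩
    · intro l hl
      rw [hS, Finset.mem_filter, Finset.Nat.mem_antidiagonalTuple] at hl ⊢
      exact ⟨by rw [Equiv.sum_comp σ⁻¹ l]; exact hl.1, fun i => hl.2 (σ⁻¹ i)⟩
    · intro l _; funext x; simp
    · intro l _; funext x; simp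
    · intro l _; rfl
  rw [Finset.sum_congr rfl (fun σ _ => hB σ), Finset.sum_const, Finset.card_univ,
    Fintype.card_perm, Fintype.card_fin, nsmul_eq_mul]
  have hD : ∀ l ∈ S, ∏ j : Fin (m + 2), (∑ k ∈ univ.filter (fun k => k ≤ j), ((l k : ℚ)))⁻¹
      = (N : ℚ)⁻¹ * ∏ j : Fin (m + 1), ((pfx l (j : ℕ) : ℕ) : ℚ)⁻¹ := by
    intro l hl
    rw [hS, Finset.mem_filter, Finset.Nat.mem_antidiagonalTuple] at hl
    rw [Fin.prod_univ_castSucc, mul_comm]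
    congr 1
    · rw [Finset.filter_true_of_mem (fun k _ => Fin.le_last k), ← Nat.cast_sum, hl.1]
    · apply Finset.prod_congr rfl
      intro j _
      congr 1
      rw [pfx, Nat.cast_sum]
      apply Finset.sum_congr
      · ext k
        simp [Fin.le_def]
      · intro k _; rfl
  rw [Finset.sum_congr rfl hD, ← Finset.mul_sum, chain_bij p hp m N hN hpN,
    div_eq_mul_inv, mul_assoc]
  rfl
end

section
/- Let m, n be positive integers with n ≥ 2 and let p be a prime with p > n+1 and p ∤ m. Then R_n^{(m)}(p) ≡ Σ_{a=1}^{n−1} binom(m+n−a−1, n−1) · S_n^{(a)}(p) (mod p). -/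
open Finset

attribute [local instance] Classical.propDecidable

section Aux

variable {p : ℕ} [hp : Fact p.Prime]

lemma aux_padicNorm_le_inv_of_dvd {z : ℤ} (h : (p : ℤ) ∣ z) :
    padicNorm p (z : ℚ) ≤ (p : ℚ)⁻¹ := by
  have hp1 : (1 : ℚ) < p := by exact_mod_cast hp.out.one_lt
  rcases eq_or_ne z 0 with rfl | hz
  · simp only [Int.cast_zero, padicNorm.zero]
    positivity
  · have hz' : (z : ℚ) ≠ 0 := by exact_mod_cast hz
    rw [padicNorm.eq_zpow_of_nonzero hz', show ((p : ℚ)⁻¹) = (p : ℚ) ^ (-1 : ℤ) by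
      rw [zpow_neg_one]]
    apply zpow_le_zpow_right₀ hp1.le
    have h1 : 1 ≤ padicValInt p z := by
      have := (padicValInt_dvd_iff 1 z).mp (by simpa using h)
      tauto
    have : padicValRat p (z : ℚ) = padicValInt p z := padicValRat.of_int
    omega

lemma aux_padicNorm_inv_nat {c : ℕ} (h : ¬ p ∣ c) :
    padicNorm p ((c : ℚ)⁻¹) = 1 := by
  have h1 : padicNorm p (c : ℚ) = 1 := (padicNorm.nat_eq_one_iff c).mpr h
  rw [show ((c : ℚ)⁻¹) = 1 / c by rw [one_div], padicNorm.div, padicNorm.one, h1]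
  norm_num

lemma aux_padicNorm_sum_le {ι : Type*} {s : Finset ι} {f : ι → ℚ} {t : ℚ} (ht : 0 ≤ t)
    (h : ∀ i ∈ s, padicNorm p (f i) ≤ t) :
    padicNorm p (∑ i ∈ s, f i) ≤ t := by
  classical
  induction s using Finset.induction_on with
  | empty => simpa [padicNorm.zero] using ht
  | insert _ _ ha ih =>
    rename_i a s'
    rw [Finset.sum_insert ha]
    refine le_trans padicNorm.nonarchimedean (max_le ?_ ?_)
    · exact h a (Finset.mem_insert_self a s')
    · exact ih fun i hi => h i (Finset.mem_insert_of_mem hi)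

lemma aux_padicNorm_prod_le_one {ι : Type*} {s : Finset ι} {f : ι → ℚ}
    (h : ∀ i ∈ s, padicNorm p (f i) ≤ 1) :
    padicNorm p (∏ i ∈ s, f i) ≤ 1 := by
  classical
  induction s using Finset.induction_on with
  | empty => simp [padicNorm.one]
  | insert _ _ ha ih =>
    rename_i a s'
    rw [Finset.prod_insert ha, padicNorm.mul]
    exact mul_le_one₀ (h a (Finset.mem_insert_self a s')) (padicNorm.nonneg _)
      (ih fun i hi => h i (Finset.mem_insert_of_mem hi))

lemma aux_padicNorm_prod_sub_prod {ι : Type*} {s : Finset ι} {f g : ι → ℚ}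
    (hf : ∀ i ∈ s, padicNorm p (f i) ≤ 1) (hg : ∀ i ∈ s, padicNorm p (g i) ≤ 1)
    (hfg : ∀ i ∈ s, padicNorm p (f i - g i) ≤ (p : ℚ)⁻¹) :
    padicNorm p (∏ i ∈ s, f i - ∏ i ∈ s, g i) ≤ (p : ℚ)⁻¹ := by
  classical
  have hp0 : (0 : ℚ) ≤ (p : ℚ)⁻¹ := by positivity
  induction s using Finset.induction_on with
  | empty => simpa [padicNorm.zero] using hp0
  | insert _ _ ha ih =>
    rename_i a s'
    rw [Finset.prod_insert ha, Finset.prod_insert ha]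
    have key : f a * ∏ i ∈ s', f i - g a * ∏ i ∈ s', g i
        = f a * (∏ i ∈ s', f i - ∏ i ∈ s', g i) + (f a - g a) * ∏ i ∈ s', g i := by ring
    rw [key]
    refine le_trans padicNorm.nonarchimedean (max_le ?_ ?_)
    · rw [padicNorm.mul]
      calc padicNorm p (f a) * padicNorm p (∏ i ∈ s', f i - ∏ i ∈ s', g i)
          ≤ 1 * (p : ℚ)⁻¹ := by
            apply mul_le_mul (hf a (Finset.mem_insert_self a s'))
              (ih (fun i hi => hf i (Finset.mem_insert_of_mem hi))
                  (fun i hi => hg i (Finset.mem_insert_of_mem hi))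
                  (fun i hi => hfg i (Finset.mem_insert_of_mem hi)))
              (padicNorm.nonneg _) zero_le_one
        _ = (p : ℚ)⁻¹ := one_mul _
    · rw [padicNorm.mul]
      calc padicNorm p (f a - g a) * padicNorm p (∏ i ∈ s', g i)
          ≤ (p : ℚ)⁻¹ * 1 := by
            apply mul_le_mul (hfg a (Finset.mem_insert_self a s'))
              (aux_padicNorm_prod_le_one (fun i hi => hg i (Finset.mem_insert_of_mem hi)))
              (padicNorm.nonneg _) hp0
        _ = (p : ℚ)⁻¹ := mul_one _

lemma aux_inv_sub_inv {c d : ℕ} (hc : ¬ p ∣ c) (hd : ¬ p ∣ d) (hcd : (p : ℤ) ∣ (c : ℤ) - d) :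
    padicNorm p ((c : ℚ)⁻¹ - (d : ℚ)⁻¹) ≤ (p : ℚ)⁻¹ := by
  have hcn : c ≠ 0 := fun h => hc (h ▸ dvd_zero p)
  have hdn : d ≠ 0 := fun h => hd (h ▸ dvd_zero p)
  have hc0 : (c : ℚ) ≠ 0 := by exact_mod_cast hcn
  have hd0 : (d : ℚ) ≠ 0 := by exact_mod_cast hdn
  have key : (c : ℚ)⁻¹ - (d : ℚ)⁻¹ = (((d : ℤ) - c : ℤ) : ℚ) / ((c : ℚ) * d) := by
    push_cast
    field_simp
  rw [key, padicNorm.div, padicNorm.mul,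
    (padicNorm.nat_eq_one_iff c).mpr hc, (padicNorm.nat_eq_one_iff d).mpr hd]
  have hdvd : (p : ℤ) ∣ (d : ℤ) - c := by
    have := dvd_neg.mpr hcd
    simpa [neg_sub] using this
  simpa using aux_padicNorm_le_inv_of_dvd hdvd

lemma aux_card_adT (n N : ℕ) :
    (Finset.Nat.antidiagonalTuple n N).card = (n + N - 1).choose N := by
  classical
  rw [← Fintype.card_coe]
  have e1 : {x // x ∈ Finset.Nat.antidiagonalTuple n N} ≃ {P : Fin n → ℕ // ∑ i, P i = N} :=
    Equiv.subtypeEquivRight fun x => Finset.Nat.mem_antidiagonalTuple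
  rw [Fintype.card_congr (e1.trans (Sym.equivNatSumOfFintype (Fin n) N).symm),
    Sym.card_sym_eq_choose, Fintype.card_fin]


lemma aux_padicCong_one_iff {p : ℕ} [hp : Fact p.Prime] (x y : ℚ) :
    padicCong p 1 x y ↔ padicNorm p (x - y) ≤ (p : ℚ)⁻¹ := by
  have hp1 : (1 : ℚ) < p := by exact_mod_cast hp.out.one_lt
  have hinv : ((p : ℚ)⁻¹) = (p : ℚ) ^ (-1 : ℤ) := (zpow_neg_one _).symm
  constructor
  · rintro (rfl | h)
    · simp only [sub_self, padicNorm.zero]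
      positivity
    · rcases eq_or_ne x y with rfl | hxy
      · simp only [sub_self, padicNorm.zero]
        positivity
      · have hne : x - y ≠ 0 := sub_ne_zero.mpr hxy
        rw [padicNorm.eq_zpow_of_nonzero hne, hinv]
        refine zpow_le_zpow_right₀ hp1.le ?_
        push_cast at h
        omega
  · intro h
    rcases eq_or_ne x y with rfl | hxy
    · exact Or.inl rfl
    · right
      have hne : x - y ≠ 0 := sub_ne_zero.mpr hxy
      rw [padicNorm.eq_zpow_of_nonzero hne, hinv] at h
      have := (zpow_le_zpow_iff_right₀ hp1).mp h
      push_cast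
      omega

end Aux

theorem stmt2 (m n : ℕ) (hm : 1 ≤ m) (hn : 2 ≤ n)
    (p : ℕ) (hp : p.Prime) (hpn : n + 1 < p) (hpm : ¬ p ∣ m) :
    padicCong p 1 (Zsum p n (m * p ^ 1))
      (∑ a ∈ Finset.Icc 1 (n - 1), ((m + n - a - 1).choose (n - 1) : ℚ) * Ssum p n a 1) := by
  haveI : Fact p.Prime := ⟨hp⟩
  have hppos : 0 < p := hp.pos
  set T : Finset (Fin n → ℕ) :=
    (Finset.Nat.antidiagonalTuple n (m * p ^ 1)).filter
      (fun l => ∀ i, 0 < l i ∧ ¬ p ∣ l i) with hT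
  have hTmem : ∀ l ∈ T, (∑ i, l i = m * p ^ 1) ∧ ∀ i, 0 < l i ∧ ¬ p ∣ l i := by
    intro l hl
    rw [hT, Finset.mem_filter, Finset.Nat.mem_antidiagonalTuple] at hl
    exact hl
  have hmodpos : ∀ c : ℕ, ¬ p ∣ c → 0 < c % p ∧ ¬ p ∣ c % p := by
    intro c hc
    have h1 : c % p ≠ 0 := fun h => hc (Nat.dvd_of_mod_eq_zero h)
    refine ⟨Nat.pos_of_ne_zero h1, fun hdd => h1 ?_⟩
    exact Nat.eq_zero_of_dvd_of_lt hdd (Nat.mod_lt _ hppos)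
  have hdvdint : ∀ c : ℕ, (p : ℤ) ∣ (c : ℤ) - (c % p : ℕ) := by
    intro c
    have e2 : c - c % p = p * (c / p) := Nat.sub_eq_of_eq_add (Nat.div_add_mod c p).symm
    rw [← Nat.cast_sub (Nat.mod_le c p), e2, Nat.cast_mul]
    exact dvd_mul_right _ _
  -- Step 1 : congruence replacing each `l i` by `l i % p`
  have key1 : padicCong p 1 (Zsum p n (m * p ^ 1))
      (∑ l ∈ T, ∏ i, ((l i % p : ℕ) : ℚ)⁻¹) := by
    rw [aux_padicCong_one_iff]
    have hz : Zsum p n (m * p ^ 1) = ∑ l ∈ T, ∏ i, ((l i : ℕ) : ℚ)⁻¹ := rfl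
    rw [hz, ← Finset.sum_sub_distrib]
    refine aux_padicNorm_sum_le (by positivity) ?_
    intro l hl
    obtain ⟨-, hcond⟩ := hTmem l hl
    refine aux_padicNorm_prod_sub_prod ?_ ?_ ?_
    · intro i _
      rw [aux_padicNorm_inv_nat (hcond i).2]
    · intro i _
      rw [aux_padicNorm_inv_nat (hmodpos _ (hcond i).2).2]
    · intro i _
      exact aux_inv_sub_inv (hcond i).2 (hmodpos _ (hcond i).2).2 (hdvdint (l i))
  -- Step 2 : counting
  set A : Finset ℕ := (Finset.Icc 1 (n - 1)).filter (fun a => a ≤ m) with hA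
  set S : ℕ → Finset (Fin n → ℕ) := fun a =>
    (Finset.Nat.antidiagonalTuple n (a * p ^ 1)).filter
      (fun l => ∀ i, (0 < l i ∧ ¬ p ∣ l i) ∧ l i < p ^ 1) with hS
  set Q : ℕ → Finset (Fin n → ℕ) := fun a => Finset.Nat.antidiagonalTuple n (m - a) with hQ
  have key2 : (∑ l ∈ T, ∏ i, ((l i % p : ℕ) : ℚ)⁻¹)
      = ∑ x ∈ A.sigma (fun a => S a ×ˢ Q a), ∏ i, ((x.2.1 i : ℕ) : ℚ)⁻¹ := by
    refine Finset.sum_nbij'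
      (fun l => ⟨(∑ i, l i % p) / p, (fun i => l i % p, fun i => l i / p)⟩)
      (fun x => fun i => x.2.1 i + p * x.2.2 i) ?_ ?_ ?_ ?_ ?_
    · -- forward map lands in the sigma set
      intro l hl
      obtain ⟨hsum, hcond⟩ := hTmem l hl
      have hdvdsum : p ∣ ∑ i, l i % p := by
        apply Nat.dvd_of_mod_eq_zero
        have h1 : (m * p ^ 1) % p = (∑ i, l i % p) % p := by
          rw [← hsum]; exact Finset.sum_nat_mod _ _ _
        rw [pow_one, Nat.mul_mod_left] at h1
        omega
      set a := (∑ i, l i % p) / p with ha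
      have haP : ∑ i, l i % p = a * p := (Nat.div_mul_cancel hdvdsum).symm
      have hlb : n ≤ ∑ i, l i % p := by
        have := Finset.card_nsmul_le_sum Finset.univ (fun i => l i % p) 1
          (fun i _ => (hmodpos _ (hcond i).2).1)
        simpa [Finset.card_univ] using this
      have hub : ∑ i, l i % p ≤ n * (p - 1) := by
        have := Finset.sum_le_card_nsmul Finset.univ (fun i => l i % p) (p - 1)
          (fun i _ => by show l i % p ≤ p - 1; have := Nat.mod_lt (l i) hppos; omega)
        simpa [Finset.card_univ] using this
      have ha1 : 1 ≤ a := by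
        rcases Nat.eq_zero_or_pos a with h0 | h0
        · rw [h0, zero_mul] at haP; omega
        · exact h0
      have han : a ≤ n - 1 := by
        have h2 : a * p < n * p := by
          calc a * p = ∑ i, l i % p := haP.symm
            _ ≤ n * (p - 1) := hub
            _ < n * p := by
                apply mul_lt_mul_of_pos_left _ (show 0 < n by omega)
                omega
        have := Nat.lt_of_mul_lt_mul_right h2
        omega
      have ham : a ≤ m := by
        have h3 : ∑ i, l i % p ≤ ∑ i, l i := Finset.sum_le_sum (fun i _ => Nat.mod_le _ _)
        rw [haP, hsum, pow_one] at h3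
        exact Nat.le_of_mul_le_mul_right h3 hppos
      have hqsum : ∑ i, l i / p = m - a := by
        have e : ∑ i, l i = p * (∑ i, l i / p) + ∑ i, l i % p := by
          rw [Finset.mul_sum, ← Finset.sum_add_distrib]
          exact Finset.sum_congr rfl fun i _ => (Nat.div_add_mod _ _).symm
        rw [hsum, haP, pow_one] at e
        obtain ⟨k, hk⟩ := Nat.exists_eq_add_of_le ham
        have e3 : a * p + k * p = p * (∑ i, l i / p) + a * p := by
          rw [← add_mul, ← hk]; exact e
        have e4 : k * p = p * (∑ i, l i / p) := by omega
        have e5 : p * (∑ i, l i / p) = p * (m - a) := by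
          rw [← e4, hk, mul_comm]
          congr 1
          omega
        exact Nat.eq_of_mul_eq_mul_left hppos e5
      rw [Finset.mem_sigma, Finset.mem_product]
      refine ⟨?_, ?_, ?_⟩
      · rw [hA, Finset.mem_filter, Finset.mem_Icc]
        exact ⟨⟨ha1, han⟩, ham⟩
      · rw [hS]
        rw [Finset.mem_filter, Finset.Nat.mem_antidiagonalTuple]
        refine ⟨by rw [pow_one]; exact haP, fun i => ?_⟩
        exact ⟨hmodpos _ (hcond i).2, by rw [pow_one]; exact Nat.mod_lt _ hppos⟩
      · rw [hQ, Finset.Nat.mem_antidiagonalTuple]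
        exact hqsum
    · -- backward map lands in T
      rintro ⟨a, s, q⟩ hx
      rw [Finset.mem_sigma, Finset.mem_product] at hx
      obtain ⟨haA, hsS, hqQ⟩ := hx
      rw [hA, Finset.mem_filter, Finset.mem_Icc] at haA
      obtain ⟨⟨ha1, han⟩, ham⟩ := haA
      rw [hS, Finset.mem_filter, Finset.Nat.mem_antidiagonalTuple] at hsS
      obtain ⟨hssum, hscond⟩ := hsS
      rw [hQ, Finset.Nat.mem_antidiagonalTuple] at hqQ
      dsimp only at hssum hscond hqQ ham ha1 han
      rw [hT, Finset.mem_filter, Finset.Nat.mem_antidiagonalTuple]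
      constructor
      · rw [Finset.sum_add_distrib, ← Finset.mul_sum, hssum, hqQ]
        obtain ⟨k, hk⟩ := Nat.exists_eq_add_of_le ham
        rw [hk, pow_one, show a + k - a = k from by omega, add_mul, mul_comm p k]
      · intro i
        show 0 < s i + p * q i ∧ ¬ p ∣ (s i + p * q i)
        refine ⟨by have := (hscond i).1.1; omega, fun hdd => (hscond i).1.2 ?_⟩
        rw [add_comm] at hdd
        exact (Nat.dvd_add_right (dvd_mul_right p (q i))).mp hdd
    · -- left inverse
      intro l hl
      exact funext fun i => Nat.mod_add_div _ _
    · -- right inverse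
      rintro ⟨a, s, q⟩ hx
      rw [Finset.mem_sigma, Finset.mem_product] at hx
      obtain ⟨haA, hsS, hqQ⟩ := hx
      rw [hS, Finset.mem_filter, Finset.Nat.mem_antidiagonalTuple] at hsS
      obtain ⟨hssum, hscond⟩ := hsS
      dsimp only at hssum hscond
      have hslt : ∀ i, s i < p := fun i => by have := (hscond i).2; rwa [pow_one] at this
      have e1 : ∀ i, (s i + p * q i) % p = s i := fun i => by
        rw [Nat.add_mul_mod_self_left, Nat.mod_eq_of_lt (hslt i)]
      have e2 : ∀ i, (s i + p * q i) / p = q i := fun i => by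
        rw [Nat.add_mul_div_left _ _ hppos, Nat.div_eq_of_lt (hslt i), zero_add]
      have e0 : (∑ i, (s i + p * q i) % p) / p = a := by
        rw [Finset.sum_congr rfl fun i _ => e1 i, hssum, pow_one,
          Nat.mul_div_cancel _ hppos]
      dsimp only
      rw [e0, show (fun i => (s i + p * q i) % p) = s from funext e1,
        show (fun i => (s i + p * q i) / p) = q from funext e2]
    · intro l hl
      rfl
  have key4 : ∀ a ∈ A, (∑ y ∈ S a ×ˢ Q a, ∏ i, ((y.1 i : ℕ) : ℚ)⁻¹)
      = ((m + n - a - 1).choose (n - 1) : ℚ) * Ssum p n a 1 := by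
    intro a ha
    rw [hA, Finset.mem_filter, Finset.mem_Icc] at ha
    obtain ⟨⟨ha1, han⟩, ham⟩ := ha
    rw [Finset.sum_product]
    simp only [Finset.sum_const]
    rw [← Finset.smul_sum]
    have hc : (Q a).card = (m + n - a - 1).choose (n - 1) := by
      rw [hQ]
      rw [aux_card_adT]
      have h1 : n + (m - a) - 1 = m + n - a - 1 := by omega
      have h2 : m + n - a - 1 - (n - 1) = m - a := by omega
      have h3 : n - 1 ≤ m + n - a - 1 := by omega
      rw [h1, ← h2, Nat.choose_symm h3]
    rw [hc, nsmul_eq_mul]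
    rfl
  have key3 : (∑ a ∈ A, ((m + n - a - 1).choose (n - 1) : ℚ) * Ssum p n a 1)
      = ∑ a ∈ Finset.Icc 1 (n - 1), ((m + n - a - 1).choose (n - 1) : ℚ) * Ssum p n a 1 := by
    rw [hA]
    apply Finset.sum_filter_of_ne
    intro x hx hfx
    rw [Finset.mem_Icc] at hx
    by_contra hxm
    apply hfx
    have h0 : (m + n - x - 1).choose (n - 1) = 0 := Nat.choose_eq_zero_of_lt (by omega)
    rw [h0]
    simp
  have final : (∑ l ∈ T, ∏ i, ((l i % p : ℕ) : ℚ)⁻¹)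
      = ∑ a ∈ Finset.Icc 1 (n - 1), ((m + n - a - 1).choose (n - 1) : ℚ) * Ssum p n a 1 := by
    rw [key2, ← Finset.sum_sigma' A (fun a => S a ×ˢ Q a)
      (fun a y => ∏ i, ((y.1 i : ℕ) : ℚ)⁻¹)]
    rw [Finset.sum_congr rfl key4]
    exact key3
  rwa [final] at key1
end
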